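/- Let v be a polynomial in Q_K = P₂(ℝ³) ⊕ span{z(z²−1)}. Let J_{F₄}v (respectively J_{F₅}v) be the unique affine function of (x,y) interpolating v at V₁=(0,0,−1), V₂=(1,0,−1), V₃=(0,1,−1) (respectively at V₄=(0,0,1), V₅=(1,0,1), V₆=(0,1,1)). Then, as functions of (x,y) on the triangle {x,y ≥ 0, x+y ≤ 1}: v(x,y,−1) − (J_{F₄}v)(x,y) = v(x,y,1) − (J_{F₅}v)(x,y). -/
import Mathlib

noncomputable section

def InQK (v : ℝ → ℝ → ℝ → ℝ) : Prop :=
  ∃ (p : MvPolynomial (Fin 3) ℝ) (c : ℝ), p.totalDegree ≤ 2 ∧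
    ∀ x y z : ℝ, v x y z = MvPolynomial.eval ![x, y, z] p + c * (z * (z^2 - 1))

def IsAffine2 (g : ℝ → ℝ → ℝ) : Prop :=
  ∃ a b c : ℝ, ∀ x y : ℝ, g x y = a * x + b * y + c

lemma affine_sum {α : Type*} (s : Finset α) (f : α → ℝ → ℝ → ℝ)
    (h : ∀ m ∈ s, IsAffine2 (f m)) : IsAffine2 (fun x y => ∑ m ∈ s, f m x y) := by
  classical
  induction s using Finset.cons_induction with
  | empty => exact ⟨0, 0, 0, fun x y => by simp⟩
  | cons a s ha ih =>
    obtain ⟨p, q, r, hpqr⟩ := h a (Finset.mem_cons_self a s)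
    obtain ⟨p', q', r', h'⟩ := ih fun m hm => h m (Finset.mem_cons_of_mem hm)
    exact ⟨p + p', q + q', r + r', fun x y => by
      simp only [Finset.sum_cons, hpqr, h']; ring⟩

lemma mono_affine (k : ℝ) (a b c : ℕ) (h : a + b + c ≤ 2) :
    IsAffine2 (fun x y : ℝ => k * (x ^ a * y ^ b * (1:ℝ) ^ c)
      - k * (x ^ a * y ^ b * (-1:ℝ) ^ c)) := by
  have ha : a ≤ 2 := by omega
  have hb : b ≤ 2 := by omega
  have hc : c ≤ 2 := by omega
  interval_cases a <;> interval_cases b <;> interval_cases c <;>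
    first
      | (refine ⟨0, 0, 0, fun x y => ?_⟩; ring1)
      | (refine ⟨0, 0, 2 * k, fun x y => ?_⟩; ring1)
      | (refine ⟨2 * k, 0, 0, fun x y => ?_⟩; ring1)
      | (refine ⟨0, 2 * k, 0, fun x y => ?_⟩; ring1)
      | (exfalso; omega)

lemma diff_affine (v : ℝ → ℝ → ℝ → ℝ) (hv : InQK v) :
    ∃ A B C : ℝ, ∀ x y : ℝ, v x y 1 - v x y (-1) = A * x + B * y + C := by
  obtain ⟨p, c, hdeg, hp⟩ := hv
  have key : IsAffine2 (fun x y =>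
      ∑ d ∈ p.support, (MvPolynomial.coeff d p * (x ^ d 0 * y ^ d 1 * (1:ℝ) ^ d 2)
        - MvPolynomial.coeff d p * (x ^ d 0 * y ^ d 1 * (-1:ℝ) ^ d 2))) := by
    apply affine_sum
    intro d hd
    have h2 : d 0 + d 1 + d 2 ≤ 2 := by
      have h1 := le_trans (MvPolynomial.le_totalDegree hd) hdeg
      rw [Finsupp.sum_fintype] at h1
      · simpa [Fin.sum_univ_three] using h1
      · intro i; rfl
    exact mono_affine _ _ _ _ h2
  obtain ⟨A, B, C, hABC⟩ := key
  have hABC' : ∀ x y : ℝ,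
      (∑ d ∈ p.support, (MvPolynomial.coeff d p * (x ^ d 0 * y ^ d 1 * (1:ℝ) ^ d 2)
        - MvPolynomial.coeff d p * (x ^ d 0 * y ^ d 1 * (-1:ℝ) ^ d 2)))
      = A * x + B * y + C := hABC
  refine ⟨A, B, C, fun x y => ?_⟩
  have e1 : v x y 1 = MvPolynomial.eval ![x, y, 1] p := by rw [hp]; ring
  have e2 : v x y (-1) = MvPolynomial.eval ![x, y, -1] p := by rw [hp]; ring
  rw [e1, e2, MvPolynomial.eval_eq', MvPolynomial.eval_eq', ← Finset.sum_sub_distrib,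
    ← hABC' x y]
  apply Finset.sum_congr rfl
  intro d _
  simp [Fin.prod_univ_three]

theorem top_bottom_residual_equal_element2 (v : ℝ → ℝ → ℝ → ℝ) (hv : InQK v)
    (g4 g5 : ℝ → ℝ → ℝ) (hg4 : IsAffine2 g4) (hg5 : IsAffine2 g5)
    (h41 : g4 0 0 = v 0 0 (-1)) (h42 : g4 1 0 = v 1 0 (-1))
    (h43 : g4 0 1 = v 0 1 (-1))
    (h51 : g5 0 0 = v 0 0 1) (h52 : g5 1 0 = v 1 0 1)
    (h53 : g5 0 1 = v 0 1 1) :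
    ∀ x y : ℝ, v x y (-1) - g4 x y = v x y 1 - g5 x y := by
  obtain ⟨A, B, C, hD⟩ := diff_affine v hv
  obtain ⟨a4, b4, c4, h4⟩ := hg4
  obtain ⟨a5, b5, c5, h5⟩ := hg5
  rw [h4] at h41 h42 h43
  rw [h5] at h51 h52 h53
  intro x y
  have d1 := hD 0 0
  have d2 := hD 1 0
  have d3 := hD 0 1
  have dxy := hD x y
  rw [h4 x y, h5 x y]
  linear_combination (-1 : ℝ) * dxy + x * (h52 - h42 + h41 - h51 + d2 - d1)
    + y * (h53 - h43 + h41 - h51 + d3 - d1) + (h51 - h41 + d1)
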